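/- Powerset-determinisation invariant: let S = (C, {C}, R, c_i) be a predicate-free data storage and det(S) have configurations 𝒫(C) with det(r) = {(d, r(d)) | d ⊆ C, r(d) ≠ ∅} for each r ∈ R. For any (S,Σ)-automaton ℳ and its related det(S)-automaton ℳ' (where each transition r is replaced by det(r)), and any sequence θ of transitions: (q,c,w) ⊢_θ (q',c',w') iff for every d containing c there exists d' containing c' with (q,d,w) ⊢_{det(θ)} (q',d',w'). -/

import Mathlib

/-- A transition of an automaton with data storage. -/
structure Tr (Q C Sym : Type) where
  src : Q
  lab : Option Sym
  pred : Set C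
  instr : Set (C × C)
  tgt : Q

/-- One-step transition relation of a single transition. -/
def trStep {Q C Sym : Type} (τ : Tr Q C Sym) :
    Q × C × List Sym → Q × C × List Sym → Prop := fun x y =>
  x.1 = τ.src ∧ y.1 = τ.tgt ∧ x.2.1 ∈ τ.pred ∧ (x.2.1, y.2.1) ∈ τ.instr ∧
    x.2.2 = τ.lab.toList ++ y.2.2

/-- Transition relation along a sequence of transitions. -/
def runSeq {Q C Sym : Type} :
    List (Tr Q C Sym) → (Q × C × List Sym) → (Q × C × List Sym) → Prop
  | [], x, y => x = y
  | τ :: θ, x, y => ∃ z, trStep τ x z ∧ runSeq θ z y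

/-- An automaton with data storage (states `Q`, storage configurations `C`,
input alphabet `Sym`). -/
structure Aut (Q C Sym : Type) where
  T : Set (Tr Q C Sym)
  Tfin : T.Finite
  Qi : Set Q
  Qf : Set Q

/-- The language of an automaton, given an initial storage configuration. -/
def langOf {Q C Sym : Type} (init : C) (M : Aut Q C Sym) : Set (List Sym) :=
  {w | ∃ θ : List (Tr Q C Sym), (∀ τ ∈ θ, τ ∈ M.T) ∧
    ∃ q ∈ M.Qi, ∃ q' ∈ M.Qf, ∃ c', runSeq θ (q, init, w) (q', c', [])}

/-- The language, where the initial storage configuration may be undefined. -/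
def langOptOf {Q C Sym : Type} (initO : Option C) (M : Aut Q C Sym) :
    Set (List Sym) :=
  {w | ∃ c₀, initO = some c₀ ∧ w ∈ langOf c₀ M}

/-- A data storage: predicates, instructions, an initial configuration,
such that `r(c)` is finite for every instruction `r` and configuration `c`. -/
structure DS (C : Type) where
  preds : Set (Set C)
  instrs : Set (Set (C × C))
  init : C
  fin : ∀ r ∈ instrs, ∀ c : C, {c' | (c, c') ∈ r}.Finite

/-- An automaton is an `(S,Σ)`-automaton if all its predicates and instructions
come from the data storage `S`. -/
def ValidFor {Q C Sym : Type} (S : DS C) (M : Aut Q C Sym) : Prop :=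
  ∀ τ ∈ M.T, τ.pred ∈ S.preds ∧ τ.instr ∈ S.instrs

/-- Powerset determinisation of an instruction:
`det(r) = {(d, r(d)) | d ⊆ C, r(d) ≠ ∅}`. -/
def detRel {C : Type} (r : Set (C × C)) : Set (Set C × Set C) :=
  {x | x.2 = {c' | ∃ c ∈ x.1, (c, c') ∈ r} ∧ x.2.Nonempty}

/-- Powerset determinisation of a transition (the predicate becomes the
trivial predicate on `Set C`). -/
def detTr {Q C Sym : Type} (τ : Tr Q C Sym) : Tr Q (Set C) Sym :=
  ⟨τ.src, τ.lab, Set.univ, detRel τ.instr, τ.tgt⟩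

/-- Powerset-determinisation invariant for predicate-free automata:
`(q,c,w) ⊢_θ (q',c',w')` iff for every `d ∋ c` there is `d' ∋ c'` with
`(q,d,w) ⊢_{det(θ)} (q',d',w')`. -/
lemma det_fwd {Q C Sym : Type} (θ : List (Tr Q C Sym))
    (hpf : ∀ τ ∈ θ, τ.pred = Set.univ) :
    ∀ (q q' : Q) (c c' : C) (w w' : List Sym),
      runSeq θ (q, c, w) (q', c', w') →
      ∀ d : Set C, c ∈ d → ∃ d' : Set C, c' ∈ d' ∧
        runSeq (θ.map detTr) (q, d, w) (q', d', w') := by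
  induction θ with
  | nil =>
    intro q q' c c' w w' h d hd
    simp only [runSeq, Prod.mk.injEq] at h
    obtain ⟨hq, hc, hw⟩ := h
    subst hq; subst hc; subst hw
    exact ⟨d, hd, rfl⟩
  | cons τ θ ih =>
    intro q q' c c' w w' h d hd
    obtain ⟨⟨z1, z2, z3⟩, ⟨hs, ht, _, hi, hw⟩, hrest⟩ := h
    simp only at hs ht hi hw
    have hz2 : z2 ∈ {c' | ∃ c ∈ d, (c, c') ∈ τ.instr} := ⟨c, hd, hi⟩
    obtain ⟨d', hc'd', hrun⟩ := ih (fun τ h => hpf τ (List.mem_cons_of_mem _ h))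
      z1 q' z2 c' z3 w' hrest {c' | ∃ c ∈ d, (c, c') ∈ τ.instr} hz2
    refine ⟨d', hc'd', ⟨(z1, {c' | ∃ c ∈ d, (c, c') ∈ τ.instr}, z3),
      ⟨hs, ht, trivial, ⟨rfl, ⟨z2, hz2⟩⟩, hw⟩, hrun⟩⟩

lemma det_bwd {Q C Sym : Type} (θ : List (Tr Q C Sym))
    (hpf : ∀ τ ∈ θ, τ.pred = Set.univ) :
    ∀ (q q' : Q) (c' : C) (d d' : Set C) (w w' : List Sym),
      runSeq (θ.map detTr) (q, d, w) (q', d', w') → c' ∈ d' →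
      ∃ c ∈ d, runSeq θ (q, c, w) (q', c', w') := by
  induction θ with
  | nil =>
    intro q q' c' d d' w w' h hc'
    simp only [List.map_nil, runSeq, Prod.mk.injEq] at h
    obtain ⟨hq, hd, hw⟩ := h
    subst hq; subst hd; subst hw
    exact ⟨c', hc', rfl⟩
  | cons τ θ ih =>
    intro q q' c' d d' w w' h hc'
    obtain ⟨⟨z1, z2, z3⟩, ⟨hs, ht, _, hi, hw⟩, hrest⟩ := h
    simp only [detTr] at hs ht hi hw
    obtain ⟨hz2, _⟩ := hi
    obtain ⟨c1, hc1, hrun⟩ := ih (fun τ h => hpf τ (List.mem_cons_of_mem _ h))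
      z1 q' c' z2 d' z3 w' hrest hc'
    simp only at hz2
    rw [hz2] at hc1
    obtain ⟨c, hcd, hcc1⟩ := hc1
    refine ⟨c, hcd, ⟨(z1, c1, z3), ⟨hs, ht, ?_, hcc1, hw⟩, hrun⟩⟩
    rw [hpf τ List.mem_cons_self]; trivial

theorem det_invariant {Q C Sym : Type} (S : DS C) (M : Aut Q C Sym)
    (hval : ValidFor S M) (hpf : ∀ τ ∈ M.T, τ.pred = Set.univ)
    (θ : List (Tr Q C Sym)) (hθ : ∀ τ ∈ θ, τ ∈ M.T) :
    ∀ (q q' : Q) (c c' : C) (w w' : List Sym),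
      runSeq θ (q, c, w) (q', c', w') ↔
      ∀ d : Set C, c ∈ d → ∃ d' : Set C, c' ∈ d' ∧
        runSeq (θ.map detTr) (q, d, w) (q', d', w') := by
  have hpf' : ∀ τ ∈ θ, τ.pred = Set.univ := fun τ h => hpf τ (hθ τ h)
  intro q q' c c' w w'
  constructor
  · exact fun h d hd => det_fwd θ hpf' q q' c c' w w' h d hd
  · intro h
    obtain ⟨d', hc', hrun⟩ := h {c} rfl
    obtain ⟨c₀, hc₀, hrun'⟩ := det_bwd θ hpf' q q' c' {c} d' w w' hrun hc'
    rwa [Set.mem_singleton_iff.mp hc₀] at hrun'
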